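/- In the weighted-majority setup with parameter η satisfying 0 < η ≤ 1/2, for every expert h ∈ H: ∑_{t=1}^T (ℓ_t(ALG) − ℓ_t(h))/b_t ≤ (log n)/η + η · ∑_{t=1}^T ℓ_t(h)/b_t. -/

import Mathlib

lemma aux_rpow (η x : ℝ) (hη1 : η ≤ 1/2) (hx0 : 0 ≤ x) (hx1 : x ≤ 1) :
    (1 - η) ^ x ≤ 1 - η * x := by
  have h1 : (0:ℝ) < 1 - η := by linarith
  rw [Real.rpow_def_of_pos h1]
  have hc := convexOn_exp.2 (Set.mem_univ (Real.log (1-η))) (Set.mem_univ 0)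
    hx0 (by linarith : (0:ℝ) ≤ 1 - x) (by ring)
  simp only [smul_eq_mul, mul_zero, add_zero] at hc
  have e : x * Real.log (1-η) = Real.log (1-η) * x := by ring
  rw [e, Real.exp_log h1, Real.exp_zero] at hc
  calc Real.exp (Real.log (1-η) * x) ≤ x * (1-η) + (1-x) * 1 := hc
    _ = 1 - η * x := by ring

lemma aux_log (η : ℝ) (hη0 : 0 < η) (hη1 : η ≤ 1/2) : -Real.log (1-η) ≤ η + η^2 := by
  have h1 : (0:ℝ) < 1 - η := by linarith
  have key : Real.exp (-(η + η^2)) ≤ 1 - η := by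
    set x : ℝ := -(η + η^2) with hx
    have habs : |x| ≤ 1 := by rw [abs_of_nonpos (by nlinarith)]; nlinarith
    have hb := Real.exp_bound habs (n := 4) (by norm_num)
    have hs : ∑ m ∈ Finset.range 4, x ^ m / m.factorial = 1 + x + x^2/2 + x^3/6 := by
      norm_num [Finset.sum_range_succ, Nat.factorial]
    rw [hs] at hb
    norm_num [Nat.factorial] at hb
    have habs2 : |x| = η + η^2 := by rw [abs_of_nonpos (by nlinarith)]; ring
    rw [habs2] at hb
    have hb2 : Real.exp x ≤ 1 + x + x^2/2 + x^3/6 + (η+η^2)^4 * (5/96) := by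
      have := (abs_sub_le_iff.1 hb).1
      linarith
    have : 1 + x + x^2/2 + x^3/6 + (η+η^2)^4 * (5/96) ≤ 1 - η := by
      rw [hx]; nlinarith [sq_nonneg η, sq_nonneg (η - 1/2), mul_pos hη0 hη0,
        pow_le_pow_left₀ hη0.le hη1 2, pow_le_pow_left₀ hη0.le hη1 3,
        pow_le_pow_left₀ hη0.le hη1 4]
    linarith
  have := Real.log_le_log (Real.exp_pos _) key
  rw [Real.log_exp] at this
  linarith

theorem stmt_15 {H : Type*} [Fintype H] (n T : ℕ) (hn : 2 ≤ n)
    (hcard : Fintype.card H = n) (hT : 1 ≤ T)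
    (ℓ : ℕ → H → ℝ) (b : ℕ → ℝ) (η : ℝ)
    (hη0 : 0 < η) (hη1 : η ≤ 1 / 2)
    (hℓ0 : ∀ t ∈ Finset.Icc 1 T, ∀ h : H, 0 ≤ ℓ t h)
    (hb : ∀ t ∈ Finset.Icc 1 T, 0 < b t)
    (hℓb : ∀ t ∈ Finset.Icc 1 T, ∀ h : H, ℓ t h ≤ b t)
    (w : ℕ → H → ℝ)
    (hw1 : ∀ h : H, w 1 h = 1)
    (hwrec : ∀ t ∈ Finset.Icc 1 T, ∀ h : H,
      w (t + 1) h = w t h * (1 - η) ^ (ℓ t h / b t)) :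
    ∀ h : H,
      ∑ t ∈ Finset.Icc 1 T,
          ((∑ h' : H, w t h' * ℓ t h') / (∑ h' : H, w t h') - ℓ t h) / b t ≤
        Real.log n / η + η * ∑ t ∈ Finset.Icc 1 T, ℓ t h / b t := by
  intro h
  haveI : Nonempty H := Fintype.card_pos_iff.mp (by omega)
  have h1η : (0:ℝ) < 1 - η := by linarith
  -- positivity of weights
  have hpos : ∀ k, k ≤ T → ∀ h' : H, 0 < w (k+1) h' := by
    intro k
    induction k with
    | zero => intro _ h'; rw [hw1]; norm_num
    | succ k ih =>
      intro hk h'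
      rw [hwrec (k+1) (by simp only [Finset.mem_Icc]; omega) h']
      exact mul_pos (ih (by omega) h') (Real.rpow_pos_of_pos h1η _)
  -- product formula
  have hprod : ∀ k, k ≤ T →
      w (k+1) h = (1-η) ^ (∑ t ∈ Finset.Icc 1 k, ℓ t h / b t) := by
    intro k
    induction k with
    | zero =>
      intro _
      rw [hw1, Finset.Icc_eq_empty (by omega : ¬ (1:ℕ) ≤ 0), Finset.sum_empty,
        Real.rpow_zero]
    | succ k ih =>
      intro hk
      rw [hwrec (k+1) (by simp only [Finset.mem_Icc]; omega) h, ih (by omega),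
        Finset.sum_Icc_succ_top (by omega : 1 ≤ k + 1), Real.rpow_add h1η]
  -- upper bound on total weight
  have hub : ∀ k, k ≤ T → (∑ h' : H, w (k+1) h') ≤
      n * Real.exp (-(η * ∑ t ∈ Finset.Icc 1 k,
        (∑ h' : H, w t h' * ℓ t h') / (∑ h' : H, w t h') / b t)) := by
    intro k
    induction k with
    | zero =>
      intro _
      rw [Finset.Icc_eq_empty (by omega : ¬ (1:ℕ) ≤ 0), Finset.sum_empty, mul_zero,
        neg_zero, Real.exp_zero, mul_one]
      simp only [hw1, Finset.sum_const, Finset.card_univ, hcard, nsmul_eq_mul, mul_one]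
      exact le_refl _
    | succ k ih =>
      intro hk
      have hmem : k + 1 ∈ Finset.Icc 1 T := by simp only [Finset.mem_Icc]; omega
      have hbk := hb _ hmem
      have hWk : 0 < ∑ h' : H, w (k+1) h' :=
        Finset.sum_pos (fun h' _ => hpos k (by omega) h') Finset.univ_nonempty
      set A : ℝ := (∑ h' : H, w (k+1) h' * ℓ (k+1) h') / (∑ h' : H, w (k+1) h') / b (k+1)
        with hA
      have step1 : (∑ h' : H, w (k+1+1) h') ≤ (∑ h' : H, w (k+1) h') * (1 - η * A) := by
        have hrw : (∑ h' : H, w (k+1+1) h')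
            = ∑ h' : H, w (k+1) h' * (1-η) ^ (ℓ (k+1) h' / b (k+1)) :=
          Finset.sum_congr rfl (fun h' _ => hwrec _ hmem h')
        rw [hrw]
        have hle : ∀ h' : H, w (k+1) h' * (1-η) ^ (ℓ (k+1) h' / b (k+1))
            ≤ w (k+1) h' * (1 - η * (ℓ (k+1) h' / b (k+1))) := fun h' =>
          mul_le_mul_of_nonneg_left
            (aux_rpow η _ hη1 (div_nonneg (hℓ0 _ hmem h') hbk.le)
              ((div_le_one hbk).2 (hℓb _ hmem h')))
            (hpos k (by omega) h').le
        have expand : (∑ h' : H, w (k+1) h' * (1 - η * (ℓ (k+1) h' / b (k+1))))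
            = (∑ h' : H, w (k+1) h') * (1 - η * A) := by
          rw [hA]
          rw [Finset.sum_congr rfl (fun h' _ => (by field_simp :
            w (k+1) h' * (1 - η * (ℓ (k+1) h' / b (k+1)))
              = w (k+1) h' - η / b (k+1) * (w (k+1) h' * ℓ (k+1) h')))]
          rw [Finset.sum_sub_distrib, ← Finset.mul_sum]
          field_simp
        calc (∑ h' : H, w (k+1) h' * (1-η) ^ (ℓ (k+1) h' / b (k+1)))
            ≤ ∑ h' : H, w (k+1) h' * (1 - η * (ℓ (k+1) h' / b (k+1))) :=
              Finset.sum_le_sum (fun h' _ => hle h')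
          _ = (∑ h' : H, w (k+1) h') * (1 - η * A) := expand
      have step2 : (∑ h' : H, w (k+1) h') * (1 - η * A)
          ≤ (∑ h' : H, w (k+1) h') * Real.exp (-(η * A)) :=
        mul_le_mul_of_nonneg_left
          (by linarith [Real.add_one_le_exp (-(η * A))]) hWk.le
      calc (∑ h' : H, w (k+1+1) h')
          ≤ (∑ h' : H, w (k+1) h') * Real.exp (-(η * A)) := le_trans step1 step2
        _ ≤ (n * Real.exp (-(η * ∑ t ∈ Finset.Icc 1 k,
              (∑ h' : H, w t h' * ℓ t h') / (∑ h' : H, w t h') / b t)))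
              * Real.exp (-(η * A)) :=
            mul_le_mul_of_nonneg_right (ih (by omega)) (Real.exp_pos _).le
        _ = n * Real.exp (-(η * ∑ t ∈ Finset.Icc 1 (k+1),
              (∑ h' : H, w t h' * ℓ t h') / (∑ h' : H, w t h') / b t)) := by
            rw [Finset.sum_Icc_succ_top (by omega : 1 ≤ k + 1), mul_assoc,
              ← Real.exp_add]
            congr 2
            ring
  -- put things together
  have hL0 : 0 ≤ ∑ t ∈ Finset.Icc 1 T, ℓ t h / b t :=
    Finset.sum_nonneg fun t ht => div_nonneg (hℓ0 t ht h) (hb t ht).le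
  have hwT : (1-η) ^ (∑ t ∈ Finset.Icc 1 T, ℓ t h / b t) ≤ ∑ h' : H, w (T+1) h' := by
    rw [← hprod T le_rfl]
    exact Finset.single_le_sum (fun h' _ => (hpos T le_rfl h').le) (Finset.mem_univ h)
  have hkey := le_trans hwT (hub T le_rfl)
  have hlog : (∑ t ∈ Finset.Icc 1 T, ℓ t h / b t) * Real.log (1-η)
      ≤ Real.log n + (-(η * ∑ t ∈ Finset.Icc 1 T,
          (∑ h' : H, w t h' * ℓ t h') / (∑ h' : H, w t h') / b t)) := by
    have := Real.log_le_log (Real.rpow_pos_of_pos h1η _) hkey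
    rwa [Real.log_rpow h1η, Real.log_mul (Nat.cast_ne_zero.2 (by omega))
      (Real.exp_ne_zero _), Real.log_exp] at this
  have hgoal : ∑ t ∈ Finset.Icc 1 T,
      ((∑ h' : H, w t h' * ℓ t h') / (∑ h' : H, w t h') - ℓ t h) / b t
      = (∑ t ∈ Finset.Icc 1 T,
          (∑ h' : H, w t h' * ℓ t h') / (∑ h' : H, w t h') / b t)
        - ∑ t ∈ Finset.Icc 1 T, ℓ t h / b t := by
    rw [← Finset.sum_sub_distrib]
    exact Finset.sum_congr rfl fun t ht => sub_div _ _ _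
  rw [hgoal]
  have hlb := aux_log η hη0 hη1
  have hmul := mul_le_mul_of_nonneg_left hlb hL0
  have hηn : η * (Real.log n / η) = Real.log n := mul_div_cancel₀ _ hη0.ne'
  nlinarith [mul_pos hη0 hη0, mul_nonneg hη0.le hL0]
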